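/- For a nonempty index 𝐤=(k₁,…,k_r) and any integer j ≥ 0, the following identity holds in ℛ: Σ_{i=1}^{r} [ (j+1+k_i, k_{i+1},…,k_r, k₁,…,k_{i−1}) + (j+1, k_i, k_{i+1},…,k_r, k₁,…,k_{i−1}) ] = Σ_{m=0}^{r−1} (−1)^m Σ_{i=1}^{r−m} Σ_{(l₁,…,l_{r−m}) ∈ S_m(𝐤)} (j+1, l_{i+1},…,l_{r−m}, l₁,…,l_i)⋆. -/

import Mathlib

/-- `ℛ`, the free `ℚ`-vector space on the set of indices (realized as lists of naturals;
indices are the lists all of whose entries are positive). -/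
abbrev RSp : Type := List ℕ →₀ ℚ

/-- Merge an interleaved sequence `a □ b₁ □ b₂ ⋯`: a `true` separator is a plus sign
(the adjacent entries are added together), a `false` separator is a comma. -/
def mergeP : ℕ → List (Bool × ℕ) → List ℕ
  | a, [] => [a]
  | a, (true, b) :: rest => mergeP (a + b) rest
  | a, (false, b) :: rest => a :: mergeP b rest

/-- `𝐤⋆ ∈ ℛ`: the sum over all `2^{r−1}` comma/plus patterns of the merged index. -/
noncomputable def starIdx : List ℕ → RSp
  | [] => 0
  | a :: rest =>
      ∑ s : Fin rest.length → Bool,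
        Finsupp.single (mergeP a ((List.ofFn s).zip rest)) (1 : ℚ)

/-- The sum, over all comma/plus patterns of `𝐤` with exactly `m` plus signs,
of `(merged index)⋆ ∈ ℛ`. -/
noncomputable def starIdxM : List ℕ → ℕ → RSp
  | [], _ => 0
  | a :: rest, m =>
      ∑ s : Fin rest.length → Bool,
        if (List.ofFn s).count true = m then starIdx (mergeP a ((List.ofFn s).zip rest)) else 0

/-- The sum, over all comma/plus patterns of `𝐤` with exactly `m` plus signs,
of the merged index, as an element of `ℛ`. -/
noncomputable def mergeM : List ℕ → ℕ → RSp
  | [], _ => 0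
  | a :: rest, m =>
      ∑ s : Fin rest.length → Bool,
        if (List.ofFn s).count true = m then
          Finsupp.single (mergeP a ((List.ofFn s).zip rest)) (1 : ℚ) else 0

/-- Given a cyclic comma/plus pattern `s` on `𝐤` (`s[i]` sits between the `i`-th and the
`(i+1)`-st entry, cyclically) having at least one comma, merge the cyclically adjacent
entries joined by plus signs, reading the cycle linearly starting right after the first
comma (this fixes a choice of cyclic rotation of the merged index). -/
def cycMerge (K : List ℕ) (s : List Bool) : List ℕ :=
  match K.rotate (s.idxOf false + 1) with
  | [] => []
  | a :: rest => mergeP a ((s.rotate (s.idxOf false + 1)).zip rest)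

/-- `S_m(𝐤) ∈ ℛ`: the sum, over all cyclic comma/plus patterns of `𝐤` with exactly `m`
plus signs, of (a chosen cyclic rotation of) the cyclically merged index. -/
noncomputable def SmDef (K : List ℕ) (m : ℕ) : RSp :=
  ∑ s : Fin K.length → Bool,
    if (List.ofFn s).count true = m then
      Finsupp.single (cycMerge K (List.ofFn s)) (1 : ℚ) else 0

/-- For `M = Σ_𝐤 c_𝐤·𝐤 ∈ ℛ`, the weighted sum `Σ_{𝐤 ∈ M} f(𝐤) := Σ_𝐤 c_𝐤 • f(𝐤)`;
here used with `M = S_m(𝐤)`, giving the notation `Σ_{(l₁,…,l_{r−m}) ∈ S_m(𝐤)} f(l)`. -/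
noncomputable def Ssum (K : List ℕ) (m : ℕ) (f : List ℕ → RSp) : RSp :=
  Finsupp.sum (SmDef K m) fun l c => c • f l

/-! ### Basic mergeP lemmas -/

lemma mergeP_length (a : ℕ) (L : List (Bool × ℕ)) :
    (mergeP a L).length = (L.map Prod.fst).count false + 1 := by
  induction L generalizing a with
  | nil => simp [mergeP]
  | cons p L ih =>
    obtain ⟨b, x⟩ := p
    cases b <;> simp [mergeP, ih, List.count_cons]

lemma mergeP_ne_nil (a : ℕ) (L : List (Bool × ℕ)) : mergeP a L ≠ [] := by
  intro h
  have := mergeP_length a L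
  rw [h] at this
  simp at this

lemma mergeP_split (a b : ℕ) (L1 L2 : List (Bool × ℕ)) :
    mergeP a (L1 ++ (false, b) :: L2) = mergeP a L1 ++ mergeP b L2 := by
  induction L1 generalizing a with
  | nil => simp [mergeP]
  | cons p L1 ih =>
    obtain ⟨c, x⟩ := p
    cases c <;> simp [mergeP, ih]

lemma mergeP_allfalse (a : ℕ) (rest : List ℕ) :
    mergeP a (rest.map ((false, ·))) = a :: rest := by
  induction rest generalizing a with
  | nil => rfl
  | cons x rest ih => simp [mergeP, ih]

lemma mergeP_add (a b : ℕ) (L : List (Bool × ℕ)) :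
    mergeP (a + b) L = (a + (mergeP b L).headI) :: (mergeP b L).tail := by
  induction L generalizing b with
  | nil => simp [mergeP]
  | cons p L ih =>
    obtain ⟨c, x⟩ := p
    cases c
    · simp [mergeP]
    · rw [mergeP, mergeP, Nat.add_assoc, ih]

/-! ### Pattern sums -/

variable {M : Type*} [AddCommMonoid M]

def sumPat : ℕ → (List Bool → M) → M
  | 0, F => F []
  | n+1, F => sumPat n (fun l => F (false :: l)) + sumPat n (fun l => F (true :: l))

lemma sumPat_congr {n : ℕ} {F G : List Bool → M} (h : ∀ l : List Bool, l.length = n → F l = G l) :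
    sumPat n F = sumPat n G := by
  induction n generalizing F G with
  | zero => exact h [] rfl
  | succ n ih =>
    rw [sumPat, sumPat]
    exact congrArg₂ (· + ·) (ih fun l hl => h _ (by simp [hl])) (ih fun l hl => h _ (by simp [hl]))

lemma sumPat_add_distrib {n : ℕ} (F G : List Bool → M) :
    sumPat n (fun l => F l + G l) = sumPat n F + sumPat n G := by
  induction n generalizing F G with
  | zero => rfl
  | succ n ih =>
    rw [sumPat, sumPat, sumPat, ih, ih]
    abel

lemma sumPat_zero {n : ℕ} : sumPat n (fun _ => (0 : M)) = 0 := by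
  induction n with
  | zero => rfl
  | succ n ih => rw [sumPat, ih]; simp

lemma sumPat_hom {N : Type*} [AddCommMonoid N] (φ : M →+ N) {n : ℕ} (F : List Bool → M) :
    φ (sumPat n F) = sumPat n (fun l => φ (F l)) := by
  induction n generalizing F with
  | zero => rfl
  | succ n ih => rw [sumPat, sumPat, map_add, ih, ih]

lemma sumPat_append (m n : ℕ) (F : List Bool → M) :
    sumPat (m + n) F = sumPat m (fun l1 => sumPat n (fun l2 => F (l1 ++ l2))) := by
  induction m generalizing F with
  | zero => simp [sumPat]
  | succ m ih =>
    have : m + 1 + n = (m + n) + 1 := by omega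
    rw [this, sumPat, sumPat, ih, ih]
    rfl

lemma sumPat_comm (m n : ℕ) (H : List Bool → List Bool → M) :
    sumPat m (fun x => sumPat n (fun y => H x y)) = sumPat n (fun y => sumPat m (fun x => H x y)) := by
  induction m generalizing H with
  | zero => rfl
  | succ m ih =>
    rw [sumPat, ih, ih, ← sumPat_add_distrib]
    rfl

lemma sum_fin_bool_eq_sumPat (n : ℕ) (F : List Bool → M) :
    ∑ s : Fin n → Bool, F (List.ofFn s) = sumPat n F := by
  induction n generalizing F with
  | zero =>
    rw [Fintype.sum_eq_single (fun i : Fin 0 => i.elim0)]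
    · rfl
    · intro s hs; exact absurd (funext fun i => i.elim0) hs
  | succ n ih =>
    rw [← Equiv.sum_comp (Fin.consEquiv (fun _ : Fin (n+1) => Bool)) (fun s => F (List.ofFn s)),
      Fintype.sum_prod_type]
    rw [Fintype.sum_bool]
    have key : ∀ (b : Bool) (s' : Fin n → Bool),
        List.ofFn ((Fin.consEquiv (fun _ : Fin (n+1) => Bool)) (b, s')) = b :: List.ofFn s' := by
      intro b s'
      rw [List.ofFn_succ]
      congr 1
    simp only [key]
    rw [ih (fun l => F (true :: l)), ih (fun l => F (false :: l)), sumPat]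
    exact add_comm _ _

def sumSub : List (Bool × ℕ) → (List (Bool × ℕ) → M) → M
  | [], f => f []
  | (true, b) :: L, f => sumSub L (fun L' => f ((true, b) :: L'))
  | (false, b) :: L, f =>
      sumSub L (fun L' => f ((false, b) :: L')) + sumSub L (fun L' => f ((true, b) :: L'))

lemma sumSub_congr (L : List (Bool × ℕ)) {f g : List (Bool × ℕ) → M}
    (h : ∀ L', f L' = g L') : sumSub L f = sumSub L g := by
  induction L generalizing f g with
  | nil => exact h []
  | cons p L ih =>
    obtain ⟨b, x⟩ := p
    cases b
    · rw [sumSub, sumSub]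
      exact congrArg₂ (· + ·) (ih fun L' => h _) (ih fun L' => h _)
    · rw [sumSub, sumSub]
      exact ih fun L' => h _

lemma sumSub_hom {N : Type*} [AddCommMonoid N] (φ : M →+ N) (L : List (Bool × ℕ))
    (f : List (Bool × ℕ) → M) : φ (sumSub L f) = sumSub L (fun L' => φ (f L')) := by
  induction L generalizing f with
  | nil => rfl
  | cons p L ih =>
    obtain ⟨b, x⟩ := p
    cases b
    · rw [sumSub, sumSub, map_add, ih, ih]
    · rw [sumSub, sumSub, ih]

noncomputable def consHom (a : ℕ) : RSp →+ RSp := Finsupp.mapDomain.addMonoidHom (a :: ·)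

lemma consHom_single (a : ℕ) (l : List ℕ) (c : ℚ) :
    consHom a (Finsupp.single l c) = Finsupp.single (a :: l) c := by
  show Finsupp.mapDomain _ _ = _
  rw [Finsupp.mapDomain_single]

lemma starIdx_cons_cons (a x : ℕ) (xs : List ℕ) :
    starIdx (a :: x :: xs)
      = consHom a (starIdx (x :: xs)) + starIdx ((a + x) :: xs) := by
  show (∑ s : Fin (xs.length + 1) → Bool,
      Finsupp.single (mergeP a ((List.ofFn s).zip (x :: xs))) (1 : ℚ)) = _
  rw [← Equiv.sum_comp (Fin.consEquiv (fun _ : Fin (xs.length+1) => Bool))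
    (fun s : Fin (xs.length + 1) → Bool =>
      Finsupp.single (mergeP a ((List.ofFn s).zip (x :: xs))) (1 : ℚ)),
    Fintype.sum_prod_type, Fintype.sum_bool]
  have key : ∀ (b : Bool) (s' : Fin xs.length → Bool),
      List.ofFn ((Fin.consEquiv (fun _ : Fin (xs.length+1) => Bool)) (b, s')) = b :: List.ofFn s' := by
    intro b s'
    rw [List.ofFn_succ]
    congr 1
  simp only [key, List.zip_cons_cons, mergeP]
  rw [starIdx, starIdx, add_comm]
  congr 1
  show _ = consHom a (∑ s : Fin xs.length → Bool,
    Finsupp.single (mergeP x ((List.ofFn s).zip xs)) (1 : ℚ))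
  rw [map_sum]
  exact Finset.sum_congr rfl fun s _ => (consHom_single a _ 1).symm

lemma starIdx_mergeP (a : ℕ) (L : List (Bool × ℕ)) :
    starIdx (mergeP a L) = sumSub L (fun L' => Finsupp.single (mergeP a L') (1 : ℚ)) := by
  induction L generalizing a with
  | nil =>
    show (∑ _s : Fin ([] : List ℕ).length → Bool, Finsupp.single (mergeP a []) (1:ℚ)) = _
    rw [Finset.sum_const]
    simp [sumSub]
  | cons p L ih =>
    obtain ⟨b, x⟩ := p
    cases b
    · -- comma
      rw [show mergeP a ((false, x) :: L) = a :: mergeP x L from rfl]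
      obtain ⟨b', M', h⟩ : ∃ b' M', mergeP x L = b' :: M' := by
        cases hm : mergeP x L with
        | nil => exact absurd hm (mergeP_ne_nil x L)
        | cons u v => exact ⟨u, v, rfl⟩
      rw [h, starIdx_cons_cons, sumSub]
      congr 1
      · rw [← h, ih, sumSub_hom]
        exact sumSub_congr L fun L' => consHom_single a _ 1
      · have : (a + b') :: M' = mergeP (a + x) L := by
          rw [mergeP_add a x L, h]
          simp
        rw [this, ih]
        exact sumSub_congr L fun L' => rfl
    · -- plus
      rw [show mergeP a ((true, x) :: L) = mergeP (a + x) L from rfl, ih, sumSub]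
      rfl

section Cancel
variable {V : Type*} [AddCommGroup V] [Module ℚ V]

lemma sumPat_neg {n : ℕ} (F : List Bool → V) :
    sumPat n (fun l => -F l) = -sumPat n F := by
  have := sumPat_hom (negAddMonoidHom : V →+ V) F (n := n)
  simpa [negAddMonoidHom] using this.symm

lemma cancel (rest : List ℕ) (f : List (Bool × ℕ) → V) :
    sumPat rest.length
        (fun q => ((-1 : ℚ) ^ q.count true) • sumSub (q.zip rest) f)
      = f (rest.map ((false, ·))) := by
  induction rest generalizing f with
  | nil => simp [sumPat, sumSub]
  | cons b rest ih =>
    show sumPat (rest.length + 1) _ = _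
    rw [sumPat]
    have h1 : (sumPat rest.length fun l =>
        ((-1:ℚ) ^ (false :: l).count true) • sumSub ((false :: l).zip (b :: rest)) f)
        = sumPat rest.length (fun l =>
            (((-1:ℚ) ^ l.count true) • sumSub (l.zip rest) (fun L' => f ((false, b) :: L')))
          + (((-1:ℚ) ^ l.count true) • sumSub (l.zip rest) (fun L' => f ((true, b) :: L')))) := by
      apply sumPat_congr
      intro l _
      rw [List.zip_cons_cons, sumSub, smul_add]
      congr 2 <;> simp [List.count_cons]
    have h2 : (sumPat rest.length fun l =>
        ((-1:ℚ) ^ (true :: l).count true) • sumSub ((true :: l).zip (b :: rest)) f)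
        = sumPat rest.length (fun l =>
            -(((-1:ℚ) ^ l.count true) • sumSub (l.zip rest) (fun L' => f ((true, b) :: L')))) := by
      apply sumPat_congr
      intro l _
      rw [List.zip_cons_cons, sumSub]
      have : (true :: l).count true = l.count true + 1 := by simp [List.count_cons]
      rw [this, pow_succ]
      simp [mul_smul]
    rw [h1, h2, sumPat_add_distrib, sumPat_neg]
    rw [add_assoc, add_neg_cancel, add_zero, ih]
    rfl

lemma sumPat_LK (w a : ℕ) (rest : List ℕ) :
    sumPat rest.length
        (fun q => ((-1 : ℚ) ^ q.count true) • starIdx (w :: mergeP a (q.zip rest)))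
      = Finsupp.single ((w + a) :: rest) (1 : ℚ) + Finsupp.single (w :: a :: rest) (1 : ℚ) := by
  have step : sumPat rest.length
        (fun q => ((-1 : ℚ) ^ q.count true) • starIdx (w :: mergeP a (q.zip rest)))
      = sumPat rest.length (fun q =>
          (((-1 : ℚ) ^ q.count true) •
            sumSub (q.zip rest) (fun L' => Finsupp.single (mergeP w ((false, a) :: L')) (1:ℚ)))
        + (((-1 : ℚ) ^ q.count true) •
            sumSub (q.zip rest) (fun L' => Finsupp.single (mergeP w ((true, a) :: L')) (1:ℚ)))) := by
    apply sumPat_congr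
    intro q _
    rw [show w :: mergeP a (q.zip rest) = mergeP w ((false, a) :: q.zip rest) from rfl,
      starIdx_mergeP, sumSub, smul_add]
  rw [step, sumPat_add_distrib,
    cancel rest (fun L' => Finsupp.single (mergeP w ((false, a) :: L')) (1:ℚ)),
    cancel rest (fun L' => Finsupp.single (mergeP w ((true, a) :: L')) (1:ℚ))]
  rw [show mergeP w ((false, a) :: (rest.map ((false, ·)))) = w :: mergeP a (rest.map ((false, ·))) from rfl,
    show mergeP w ((true, a) :: (rest.map ((false, ·)))) = mergeP (w + a) (rest.map ((false, ·))) from rfl,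
    mergeP_allfalse, mergeP_allfalse]
  exact add_comm _ _

end Cancel
/-! ### Cyclic cuts -/

def cutAt (K : List ℕ) (s : List Bool) (c : ℕ) : List ℕ :=
  match K.rotate (c + 1) with
  | [] => []
  | a :: rest => mergeP a ((s.rotate (c + 1)).zip rest)

lemma cycMerge_eq_cutAt (K : List ℕ) (s : List Bool) :
    cycMerge K s = cutAt K s (s.idxOf false) := rfl

lemma cutAt_eq {K : List ℕ} {s : List Bool} {c : ℕ} {a : ℕ} {rest : List ℕ}
    (h : K.rotate (c + 1) = a :: rest) :
    cutAt K s c = mergeP a ((s.rotate (c + 1)).zip rest) := by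
  unfold cutAt
  rw [h]

lemma zip_append_left {α β : Type*} (t u : List α) (r : List β) (h : t.length = r.length) :
    (t ++ u).zip r = t.zip r := by
  conv_lhs => rw [← List.append_nil r]
  rw [List.zip_append h, List.zip_nil_right, List.append_nil]

lemma count_true_add_count_false (l : List Bool) : l.count true + l.count false = l.length := by
  induction l with
  | nil => rfl
  | cons b l ih => cases b <;> simp [List.count_cons] <;> omega

/-- The structural lemma: a cyclic merge cut at a comma `c` is a rotation of the
cyclic merge cut at the last position (for a pattern whose last entry is a comma). -/
lemma cutAt_last_false (a : ℕ) (rest : List ℕ) (t : List Bool) (hlen : t.length = rest.length)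
    (c : ℕ) (hc : c < rest.length + 1) (hfc : (t ++ [false]).getD c true = false) :
    cutAt (a :: rest) (t ++ [false]) c
      = (mergeP a (t.zip rest)).rotate (((t ++ [false]).take (c + 1)).count false) := by
  have hKlen : (a :: rest).length = rest.length + 1 := rfl
  have hslen : (t ++ [false]).length = rest.length + 1 := by simp [hlen]
  rcases Nat.lt_or_ge c rest.length with hlt | hge
  · -- interior cut
    have hct : c < t.length := hlen ▸ hlt
    have ht_c : t[c] = false := by
      rw [← List.getD_eq_getElem t true hct, ← List.getD_append t [false] true c hct]
      exact hfc
    -- decompositions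
    have htdec : t = t.take c ++ false :: t.drop (c + 1) := by
      conv_lhs => rw [← List.take_append_drop c t]
      rw [List.drop_eq_getElem_cons hct, ht_c]
    have hrdec : rest = rest.take c ++ rest[c] :: rest.drop (c + 1) := by
      conv_lhs => rw [← List.take_append_drop c rest]
      rw [List.drop_eq_getElem_cons hlt]
    set tX := t.take c with htX
    set tY := t.drop (c + 1) with htY
    set rX := rest.take c with hrX
    set rY := rest.drop (c + 1) with hrY
    set y := rest[c] with hy
    have ltX : tX.length = c := by simp [htX]; omega
    have lrX : rX.length = c := by simp [hrX]; omega
    have ltY : tY.length = rest.length - c - 1 := by simp [htY]; omega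
    have lrY : rY.length = rest.length - c - 1 := by simp [hrY]; omega
    -- compute the rotated list
    have hKrot : (a :: rest).rotate (c + 1) = y :: (rY ++ a :: rX) := by
      rw [List.rotate_eq_drop_append_take (by simp; omega), List.drop_succ_cons,
        List.take_succ_cons, List.drop_eq_getElem_cons hlt]
      rfl
    have hsrot : (t ++ [false]).rotate (c + 1) = (tY ++ [false]) ++ (tX ++ [false]) := by
      rw [List.rotate_eq_drop_append_take (by simp; omega)]
      rw [List.drop_append_of_le_length (by omega)]
      rw [List.take_append_of_le_length (by omega)]
      have h1 : List.take (c+1) t = tX ++ [false] := by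
        rw [← List.take_concat_get hct, List.concat_eq_append, ht_c]
      rw [h1]
    rw [cutAt_eq hKrot, hsrot]
    -- simplify the zip
    have hzip : ((tY ++ [false]) ++ (tX ++ [false])).zip (rY ++ a :: rX)
        = tY.zip rY ++ (false, a) :: tX.zip rX := by
      rw [show (tY ++ [false]) ++ (tX ++ [false]) = (tY ++ false :: tX) ++ [false] by simp,
        zip_append_left _ _ _ (by simp [ltY, ltX, lrY, lrX]),
        show rY ++ a :: rX = rY ++ (a :: rX) from rfl,
        List.zip_append (by rw [ltY, lrY]), List.zip_cons_cons]
    rw [hzip, mergeP_split]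
    -- right hand side
    have hRzip : t.zip rest = tX.zip rX ++ (false, y) :: tY.zip rY := by
      conv_lhs => rw [htdec, hrdec]
      rw [show tX ++ false :: tY = tX ++ (false :: tY) from rfl,
        List.zip_append (by rw [ltX, lrX]), List.zip_cons_cons]
    rw [hRzip, mergeP_split]
    have hδ : ((t ++ [false]).take (c + 1)).count false = (mergeP a (tX.zip rX)).length := by
      rw [List.take_append_of_le_length (by omega),
        ← List.take_concat_get hct, List.concat_eq_append, ht_c,
        mergeP_length, List.map_fst_zip (l₁ := tX) (l₂ := rX) (by omega)]
      simp [htX]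
    rw [hδ, List.rotate_eq_drop_append_take (by simp), List.drop_left, List.take_left]
  · -- cut at the last position
    have hceq : c = rest.length := by omega
    subst hceq
    have hKrot : (a :: rest).rotate (rest.length + 1) = a :: rest := by
      conv_lhs => rw [show rest.length + 1 = (a :: rest).length from rfl]
      exact List.rotate_length _
    have hsrot : (t ++ [false]).rotate (rest.length + 1) = t ++ [false] := by
      conv_lhs => rw [show rest.length + 1 = (t ++ [false]).length by simp [hlen]]
      exact List.rotate_length _
    rw [cutAt_eq hKrot, hsrot, zip_append_left _ _ _ hlen]
    have htake : (t ++ [false]).take (rest.length + 1) = t ++ [false] := by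
      rw [List.take_of_length_le (by simp [hlen])]
    rw [htake]
    have : (t ++ [false]).count false = (mergeP a (t.zip rest)).length := by
      rw [mergeP_length, List.map_fst_zip (l₁ := t) (l₂ := rest) (by omega)]
      simp
    rw [this, List.rotate_length]
lemma mod_helper (r c x : ℕ) (hr : 0 < r) (hc : c < r) : (c + x + (r - x % r)) % r = c := by
  have h1 : x % r < r := Nat.mod_lt _ hr
  have h2 : x % r + r * (x / r) = x := Nat.mod_add_div x r
  have h3 : c + x + (r - x % r) = (c + r) + r * (x / r) := by omega
  rw [h3, Nat.add_mul_mod_self_left, Nat.add_mod_right, Nat.mod_eq_of_lt hc]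

lemma cutAt_rotate (K : List ℕ) (s : List Bool) (ρ c : ℕ) (hs : s.length = K.length) :
    cutAt (K.rotate ρ) (s.rotate ρ) c = cutAt K s ((c + ρ) % K.length) := by
  unfold cutAt
  rw [List.rotate_rotate, List.rotate_rotate]
  have e1 : K.rotate (ρ + (c + 1)) = K.rotate ((c + ρ) % K.length + 1) := by
    conv_lhs => rw [← List.rotate_mod K (ρ + (c + 1))]
    conv_rhs => rw [← List.rotate_mod K ((c + ρ) % K.length + 1)]
    congr 1
    rw [Nat.mod_add_mod]
    congr 1
    omega
  have e2 : s.rotate (ρ + (c + 1)) = s.rotate ((c + ρ) % K.length + 1) := by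
    conv_lhs => rw [← List.rotate_mod s (ρ + (c + 1))]
    conv_rhs => rw [← List.rotate_mod s ((c + ρ) % K.length + 1)]
    rw [hs]
    congr 1
    rw [Nat.mod_add_mod]
    congr 1
    omega
  rw [e1, e2]

lemma getD_rotate (s : List Bool) (ρ c : ℕ) (hc : c < s.length) :
    (s.rotate ρ).getD c true = s.getD ((c + ρ) % s.length) true := by
  have h1 : c < (s.rotate ρ).length := by rw [List.length_rotate]; exact hc
  have h2 : (c + ρ) % s.length < s.length := Nat.mod_lt _ (by omega)
  rw [List.getD_eq_getElem _ _ h1, List.getD_eq_getElem _ _ h2, List.getElem_rotate]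

/-- Equivariance of the cut-sum under rotation. -/
lemma cutset_rot_sum {M : Type*} [AddCommMonoid M] (G : List ℕ → M) (K : List ℕ)
    (hK : 0 < K.length) (s : List Bool) (hs : s.length = K.length) (ρ : ℕ) :
    ∑ c ∈ (Finset.range K.length).filter (fun c => (s.rotate ρ).getD c true = false),
        G (cutAt (K.rotate ρ) (s.rotate ρ) c)
      = ∑ c ∈ (Finset.range K.length).filter (fun c => s.getD c true = false),
          G (cutAt K s c) := by
  set r := K.length with hr
  have key1 : ∀ c, c < r → ((c + ρ) % r + (r - ρ % r)) % r = c := by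
    intro c hc
    rw [Nat.mod_add_mod]
    exact mod_helper r c ρ hK hc
  have key2 : ∀ c, c < r → ((c + (r - ρ % r)) % r + ρ) % r = c := by
    intro c hc
    rw [Nat.mod_add_mod, Nat.add_right_comm]
    exact mod_helper r c ρ hK hc
  refine Finset.sum_nbij' (fun c => (c + ρ) % r) (fun c => (c + (r - ρ % r)) % r) ?_ ?_ ?_ ?_ ?_
  · intro c hc
    simp only [Finset.mem_filter, Finset.mem_range] at hc ⊢
    refine ⟨Nat.mod_lt _ hK, ?_⟩
    rw [← hc.2, getD_rotate s ρ c (by omega), hs]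
  · intro c hc
    simp only [Finset.mem_filter, Finset.mem_range] at hc ⊢
    refine ⟨Nat.mod_lt _ hK, ?_⟩
    rw [getD_rotate s ρ _ (by rw [hs]; exact Nat.mod_lt _ hK), hs, key2 c hc.1, hc.2]
  · intro c hc
    simp only [Finset.mem_filter, Finset.mem_range] at hc
    exact key1 c hc.1
  · intro c hc
    simp only [Finset.mem_filter, Finset.mem_range] at hc
    exact key2 c hc.1
  · intro c hc
    rw [cutAt_rotate K s ρ c hs]

lemma count_take_succ {s : List Bool} {c : ℕ} (hc : c < s.length) (hf : s.getD c true = false) :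
    (s.take (c + 1)).count false = (s.take c).count false + 1 := by
  rw [← List.take_concat_get hc, List.concat_eq_append, List.count_append,
    List.getD_eq_getElem _ _ hc] at *
  rw [hf]
  simp

lemma delta_strictMono (s : List Bool) (c c' : ℕ) (h : c < c') (hc' : c' < s.length)
    (hfc : s.getD c' true = false) :
    (s.take (c + 1)).count false < (s.take (c' + 1)).count false := by
  have h1 : s.take (c' + 1) = s.take (c + 1) ++ (s.drop (c + 1)).take (c' - c) := by
    rw [← List.take_add]
    congr 1
    omega
  rw [h1, List.count_append]
  have hpos : 0 < ((s.drop (c + 1)).take (c' - c)).count false := by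
    rw [List.count_pos_iff]
    have hidx : c' - c - 1 < ((s.drop (c + 1)).take (c' - c)).length := by
      simp
      omega
    have hval : ((s.drop (c + 1)).take (c' - c))[c' - c - 1]'hidx = false := by
      rw [List.getElem_take, List.getElem_drop]
      rw [List.getD_eq_getElem _ _ hc'] at hfc
      convert hfc using 2
      omega
    exact hval ▸ List.getElem_mem hidx
  omega

lemma exists_cut (s : List Bool) : ∀ m : ℕ, 1 ≤ m → m ≤ s.count false →
    ∃ c, c < s.length ∧ s.getD c true = false ∧ (s.take (c + 1)).count false = m := by
  induction s with
  | nil => intro m h1 h2; simp at h2; omega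
  | cons b s ih =>
    intro m h1 h2
    cases b with
    | false =>
      rcases Nat.eq_or_lt_of_le h1 with h | h
      · exact ⟨0, by simp, rfl, by simp [← h]⟩
      · obtain ⟨c, hc1, hc2, hc3⟩ := ih (m - 1) (by omega) (by simp [List.count_cons] at h2; omega)
        refine ⟨c + 1, by simp; omega, hc2, ?_⟩
        rw [List.take_succ_cons, List.count_cons]
        simp [hc3]
        omega
    | true =>
      obtain ⟨c, hc1, hc2, hc3⟩ := ih m h1 (by simpa [List.count_cons] using h2)
      refine ⟨c + 1, by simp; omega, hc2, ?_⟩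
      rw [List.take_succ_cons, List.count_cons]
      simp [hc3]

/-- The main rotation-vs-cut lemma. -/
lemma cutsum {M : Type*} [AddCommMonoid M] (G : List ℕ → M) (K : List ℕ) (hne : K ≠ [])
    (sl : List Bool) (hlen : sl.length = K.length) (hf : false ∈ sl) :
    ∑ i ∈ Finset.Icc 1 (sl.count false), G ((cycMerge K sl).rotate i)
      = ∑ c ∈ (Finset.range K.length).filter (fun c => sl.getD c true = false),
          G (cutAt K sl c) := by
  have hr : 0 < K.length := List.length_pos_iff.mpr hne
  set r := K.length with hrdef
  have hp : sl.idxOf false < sl.length := List.idxOf_lt_length_iff.mpr hf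
  set p := sl.idxOf false with hpdef
  set ρ := p + 1 with hρdef
  have hρr : ρ ≤ r := by omega
  set t := sl.drop ρ ++ sl.take p with htdef
  have hslrot : sl.rotate ρ = t ++ [false] := by
    rw [List.rotate_eq_drop_append_take (by omega)]
    have : sl.take ρ = sl.take p ++ [false] := by
      rw [← List.take_concat_get hp, List.concat_eq_append, List.getElem_idxOf hp]
    rw [this, htdef, List.append_assoc]
  have hKrotlen : 0 < (K.rotate ρ).length := by rw [List.length_rotate]; exact hr
  obtain ⟨a, rest, hK'⟩ : ∃ a rest, K.rotate ρ = a :: rest := by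
    cases h : K.rotate ρ with
    | nil => rw [h] at hKrotlen; simp at hKrotlen
    | cons u v => exact ⟨u, v, rfl⟩
  have hrestlen : rest.length = r - 1 := by
    have := List.length_rotate K ρ
    rw [hK'] at this
    simp at this
    omega
  have htlen : t.length = rest.length := by
    simp [htdef]
    omega
  have hl₀ : cycMerge K sl = mergeP a (t.zip rest) := by
    rw [cycMerge_eq_cutAt, cutAt_eq (show K.rotate (p + 1) = a :: rest from hK'),
      show (p : ℕ) + 1 = ρ from rfl, hslrot, zip_append_left _ _ _ htlen]
  set n := sl.count false with hndef
  have hn' : (t ++ [false]).count false = n := by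
    rw [← hslrot, hndef]
    exact ((List.rotate_perm sl ρ).count_eq false)
  -- Step A: the cutset sum over sl equals the cutset sum over the rotated pattern
  rw [← cutset_rot_sum G K hr sl hlen ρ]
  -- Step B: each rotated cut is a rotation of the base merge
  have hstep : ∀ c ∈ (Finset.range r).filter (fun c => (sl.rotate ρ).getD c true = false),
      G (cutAt (K.rotate ρ) (sl.rotate ρ) c)
        = G ((cycMerge K sl).rotate (((sl.rotate ρ).take (c + 1)).count false)) := by
    intro c hc
    simp only [Finset.mem_filter, Finset.mem_range] at hc
    rw [hl₀, hK', hslrot]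
    rw [cutAt_last_false a rest t htlen c (by omega) (by rw [← hslrot]; exact hc.2)]
  rw [Finset.sum_congr rfl hstep]
  -- Step C: the bijection δ between the rotated cutset and `Icc 1 n`
  symm
  refine Finset.sum_bij (fun c _ => ((sl.rotate ρ).take (c + 1)).count false) ?_ ?_ ?_ ?_
  · intro c hc
    simp only [Finset.mem_filter, Finset.mem_range] at hc
    have hlen' : c < (sl.rotate ρ).length := by rw [List.length_rotate]; omega
    rw [Finset.mem_Icc]
    constructor
    · rw [count_take_succ hlen' hc.2]; omega
    · rw [← hn', ← hslrot]
      exact List.Sublist.count_le false (List.take_sublist _ _)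
  · intro c1 hc1 c2 hc2 heq
    simp only [Finset.mem_filter, Finset.mem_range] at hc1 hc2
    by_contra hne'
    rcases Nat.lt_or_ge c1 c2 with h | h
    · have := delta_strictMono (sl.rotate ρ) c1 c2 h (by rw [List.length_rotate]; omega) hc2.2
      omega
    · have h' : c2 < c1 := by omega
      have := delta_strictMono (sl.rotate ρ) c2 c1 h' (by rw [List.length_rotate]; omega) hc1.2
      omega
  · intro m hm
    rw [Finset.mem_Icc] at hm
    obtain ⟨c, hc1, hc2, hc3⟩ := exists_cut (sl.rotate ρ) m hm.1
      (by rw [show (sl.rotate ρ).count false = n from (List.rotate_perm sl ρ).count_eq false]; exact hm.2)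
    exact ⟨c, Finset.mem_filter.mpr ⟨Finset.mem_range.mpr (by rw [List.length_rotate] at hc1; omega), hc2⟩, hc3⟩
  · intro c hc
    rfl
lemma getD_append_cons {α : Type*} (l1 : List α) (x : α) (l2 : List α) (d : α) :
    (l1 ++ x :: l2).getD l1.length d = x := by
  rw [List.getD_eq_getElem _ _ (by simp)]
  rw [List.getElem_append_right (le_refl l1.length)]
  simp

lemma cutAt_of_split (K : List ℕ) (c : ℕ) (a : ℕ) (rest : List ℕ)
    (hrot : K.rotate (c + 1) = a :: rest) (l1 l2 : List Bool)
    (h1 : l1.length = c) (h2 : (l1 ++ false :: l2).length = K.length) :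
    cutAt K (l1 ++ false :: l2) c = mergeP a ((l2 ++ l1).zip rest) := by
  have hrest : rest.length + 1 = K.length := by
    have := List.length_rotate K (c + 1)
    rw [hrot] at this
    simp at this
    omega
  rw [cutAt_eq hrot]
  congr 1
  have hsl : (l1 ++ false :: l2).length = K.length := h2
  have hrot2 : (l1 ++ false :: l2).rotate (c + 1) = (l2 ++ l1) ++ [false] := by
    rw [List.rotate_eq_drop_append_take (by simp at hsl ⊢; omega)]
    rw [← h1, List.drop_append, List.take_append]
    simp [List.drop_of_length_le, List.take_of_length_le]
  rw [hrot2, zip_append_left _ _ _ (by simp at h2 ⊢; omega)]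

/-- The key computation: the inner alternating sum over all patterns with a comma at `c`. -/
lemma inner_eq (K : List ℕ) (hne : K ≠ []) (w c : ℕ) (hc : c < K.length) :
    (∑ s : Fin K.length → Bool,
        if (List.ofFn s).getD c true = false then
          ((-1 : ℚ) ^ ((List.ofFn s).count true)) •
            starIdx (w :: cutAt K (List.ofFn s) c) else 0)
      = Finsupp.single ((w + (K.rotate (c + 1)).headI) :: (K.rotate (c + 1)).tail) (1 : ℚ)
          + Finsupp.single (w :: K.rotate (c + 1)) (1 : ℚ) := by
  have hr : 0 < K.length := List.length_pos_iff.mpr hne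
  obtain ⟨a, rest, hrot⟩ : ∃ a rest, K.rotate (c + 1) = a :: rest := by
    cases h : K.rotate (c + 1) with
    | nil => have := List.length_rotate K (c + 1); rw [h] at this; simp at this; omega
    | cons u v => exact ⟨u, v, rfl⟩
  have hrest : rest.length = K.length - 1 := by
    have := List.length_rotate K (c + 1)
    rw [hrot] at this
    simp at this
    omega
  set Φ : List Bool → RSp := fun sl =>
    if sl.getD c true = false then
      ((-1 : ℚ) ^ (sl.count true)) • starIdx (w :: cutAt K sl c) else 0 with hΦ
  have step0 : (∑ s : Fin K.length → Bool,
      if (List.ofFn s).getD c true = false then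
        ((-1 : ℚ) ^ ((List.ofFn s).count true)) •
          starIdx (w :: cutAt K (List.ofFn s) c) else 0) = sumPat K.length Φ :=
    sum_fin_bool_eq_sumPat K.length Φ
  rw [step0]
  set k := K.length - 1 - c with hk
  have hsplit : K.length = c + (k + 1) := by omega
  rw [hsplit, sumPat_append]
  have main : ∀ l1 : List Bool, l1.length = c →
      sumPat (k + 1) (fun l2 => Φ (l1 ++ l2))
        = sumPat k (fun l2 =>
            ((-1 : ℚ) ^ ((l2 ++ l1).count true)) •
              starIdx (w :: mergeP a ((l2 ++ l1).zip rest))) := by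
    intro l1 hl1
    rw [sumPat]
    have htrue : sumPat k (fun l2 => Φ (l1 ++ true :: l2)) = 0 := by
      rw [show (0 : RSp) = sumPat k (fun _ => (0 : RSp)) from sumPat_zero.symm]
      apply sumPat_congr
      intro l2 hl2
      rw [hΦ]
      dsimp only
      rw [if_neg]
      rw [← hl1, getD_append_cons]
      simp
    have hfalse : sumPat k (fun l2 => Φ (l1 ++ false :: l2))
        = sumPat k (fun l2 =>
            ((-1 : ℚ) ^ ((l2 ++ l1).count true)) •
              starIdx (w :: mergeP a ((l2 ++ l1).zip rest))) := by
      apply sumPat_congr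
      intro l2 hl2
      rw [hΦ]
      dsimp only
      rw [if_pos (by rw [← hl1, getD_append_cons])]
      rw [cutAt_of_split K c a rest hrot l1 l2 hl1 (by simp; omega)]
      congr 2
      simp [List.count_append, List.count_cons]
      omega
    rw [htrue, hfalse, add_zero]
  rw [sumPat_congr (fun l1 hl1 => main l1 hl1), sumPat_comm]
  have : ∀ l2 : List Bool, l2.length = k →
      (sumPat c fun l1 =>
        ((-1 : ℚ) ^ ((l2 ++ l1).count true)) •
          starIdx (w :: mergeP a ((l2 ++ l1).zip rest)))
      = sumPat c fun l1 =>
        (fun q => ((-1 : ℚ) ^ (q.count true)) • starIdx (w :: mergeP a (q.zip rest))) (l2 ++ l1) := by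
    intro l2 _
    rfl
  rw [sumPat_congr (fun l2 hl2 => this l2 hl2)]
  rw [(sumPat_append k c (fun q =>
    ((-1 : ℚ) ^ (q.count true)) • starIdx (w :: mergeP a (q.zip rest)))).symm]
  rw [show k + c = rest.length by omega]
  rw [sumPat_LK w a rest, hrot]
  simp [add_comm]

open Finset in
lemma Ssum_eq (K : List ℕ) (m : ℕ) (f : List ℕ → RSp) :
    Ssum K m f = ∑ s : Fin K.length → Bool,
      if (List.ofFn s).count true = m then f (cycMerge K (List.ofFn s)) else 0 := by
  unfold Ssum
  rw [show (Finsupp.sum (SmDef K m) fun l c => c • f l)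
      = Finsupp.linearCombination ℚ f (SmDef K m) from
    (Finsupp.linearCombination_apply ℚ _).symm]
  unfold SmDef
  rw [map_sum]
  refine Finset.sum_congr rfl fun s _ => ?_
  split
  · rw [Finsupp.linearCombination_single, one_smul]
  · rw [map_zero]

/-- **Proposition 6.4** of Hirose–Murahara–Ono: for a nonempty index `𝐤 = (k₁,…,k_r)`
and `j ≥ 0`,
`Σ_{i=1}^{r} [(j+1+k_i, k_{i+1},…,k_r, k₁,…,k_{i−1}) + (j+1, k_i, k_{i+1},…,k_r, k₁,…,k_{i−1})]
 = Σ_{m=0}^{r−1} (−1)^m Σ_{i=1}^{r−m} Σ_{(l₁,…,l_{r−m}) ∈ S_m(𝐤)}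
     (j+1, l_{i+1},…,l_{r−m}, l₁,…,l_i)⋆`
holds in `ℛ`. -/
theorem prop1_cyclic (K : List ℕ) (hne : K ≠ []) (hpos : ∀ x ∈ K, 0 < x) (j : ℕ) :
    (∑ i ∈ Finset.range K.length,
        (Finsupp.single ((j + 1 + (K.rotate i).headI) :: (K.rotate i).tail) (1 : ℚ)
          + Finsupp.single ((j + 1) :: K.rotate i) (1 : ℚ)))
      = ∑ m ∈ Finset.range K.length, (-1 : ℚ) ^ m •
          ∑ i ∈ Finset.Icc 1 (K.length - m),
            Ssum K m fun l => starIdx ((j + 1) :: l.rotate i) := by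
  classical
  have hr : 0 < K.length := List.length_pos_iff.mpr hne
  have step1 : ∀ m : ℕ, ((-1 : ℚ) ^ m • ∑ i ∈ Finset.Icc 1 (K.length - m),
      Ssum K m fun l => starIdx ((j + 1) :: l.rotate i))
      = ∑ s : Fin K.length → Bool, (if (List.ofFn s).count true = m then
          ((-1 : ℚ) ^ m • ∑ i ∈ Finset.Icc 1 (K.length - m),
            starIdx ((j + 1) :: (cycMerge K (List.ofFn s)).rotate i)) else 0) := by
    intro m
    rw [show (∑ i ∈ Finset.Icc 1 (K.length - m), Ssum K m fun l => starIdx ((j + 1) :: l.rotate i))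
        = ∑ i ∈ Finset.Icc 1 (K.length - m), ∑ s : Fin K.length → Bool,
            (if (List.ofFn s).count true = m then
              starIdx ((j + 1) :: (cycMerge K (List.ofFn s)).rotate i) else 0)
      from Finset.sum_congr rfl fun i _ => Ssum_eq K m _]
    rw [Finset.sum_comm, Finset.smul_sum]
    refine Finset.sum_congr rfl fun s _ => ?_
    by_cases h : (List.ofFn s).count true = m
    · simp only [h, if_true]
    · simp only [h, if_false, Finset.sum_const_zero, smul_zero]
  symm
  calc
    (∑ m ∈ Finset.range K.length, (-1 : ℚ) ^ m •
        ∑ i ∈ Finset.Icc 1 (K.length - m),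
          Ssum K m fun l => starIdx ((j + 1) :: l.rotate i))
        = ∑ m ∈ Finset.range K.length, ∑ s : Fin K.length → Bool,
            (if (List.ofFn s).count true = m then
              ((-1 : ℚ) ^ m • ∑ i ∈ Finset.Icc 1 (K.length - m),
                starIdx ((j + 1) :: (cycMerge K (List.ofFn s)).rotate i)) else 0) :=
      Finset.sum_congr rfl fun m _ => step1 m
    _ = ∑ s : Fin K.length → Bool, ∑ m ∈ Finset.range K.length,
            (if (List.ofFn s).count true = m then
              ((-1 : ℚ) ^ m • ∑ i ∈ Finset.Icc 1 (K.length - m),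
                starIdx ((j + 1) :: (cycMerge K (List.ofFn s)).rotate i)) else 0) :=
      Finset.sum_comm
    _ = ∑ s : Fin K.length → Bool,
          (if (List.ofFn s).count true ∈ Finset.range K.length then
            ((-1 : ℚ) ^ ((List.ofFn s).count true) •
              ∑ i ∈ Finset.Icc 1 (K.length - (List.ofFn s).count true),
                starIdx ((j + 1) :: (cycMerge K (List.ofFn s)).rotate i)) else 0) :=
      Finset.sum_congr rfl fun s _ => Finset.sum_ite_eq (Finset.range K.length)
        ((List.ofFn s).count true) (fun m => (-1 : ℚ) ^ m •
          ∑ i ∈ Finset.Icc 1 (K.length - m),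
            starIdx ((j + 1) :: (cycMerge K (List.ofFn s)).rotate i))
    _ = ∑ s : Fin K.length → Bool, ∑ c ∈ Finset.range K.length,
          (if (List.ofFn s).getD c true = false then
            ((-1 : ℚ) ^ ((List.ofFn s).count true) •
              starIdx ((j + 1) :: cutAt K (List.ofFn s) c)) else 0) := by
      refine Finset.sum_congr rfl fun s _ => ?_
      have hlen : (List.ofFn s).length = K.length := by simp
      have hcntle : (List.ofFn s).count true ≤ K.length := by
        have := List.count_le_length (a := true) (l := List.ofFn s); omega
      by_cases hlt : (List.ofFn s).count true < K.length
      · rw [if_pos (Finset.mem_range.mpr hlt)]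
        have hbc := count_true_add_count_false (List.ofFn s)
        have hfalse : false ∈ List.ofFn s := by
          rw [← List.count_pos_iff]; omega
        have hcf : K.length - (List.ofFn s).count true = (List.ofFn s).count false := by omega
        rw [hcf, cutsum (fun l => starIdx ((j + 1) :: l)) K hne (List.ofFn s) hlen hfalse,
          Finset.smul_sum, Finset.sum_filter]
      · rw [if_neg (by simpa using hlt)]
        have hall : (List.ofFn s).count true = (List.ofFn s).length := by omega
        symm
        refine Finset.sum_eq_zero fun c hc => ?_
        have hcl : c < (List.ofFn s).length := by rw [hlen]; exact Finset.mem_range.mp hc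
        have : (List.ofFn s).getD c true = true := by
          rw [List.getD_eq_getElem _ _ hcl]
          exact (List.count_eq_length.mp hall _ (List.getElem_mem hcl)).symm
        rw [this]
        simp
    _ = ∑ c ∈ Finset.range K.length, ∑ s : Fin K.length → Bool,
          (if (List.ofFn s).getD c true = false then
            ((-1 : ℚ) ^ ((List.ofFn s).count true) •
              starIdx ((j + 1) :: cutAt K (List.ofFn s) c)) else 0) :=
      Finset.sum_comm
    _ = ∑ c ∈ Finset.range K.length,
          (Finsupp.single ((j + 1 + (K.rotate (c + 1)).headI) :: (K.rotate (c + 1)).tail) (1 : ℚ)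
            + Finsupp.single ((j + 1) :: K.rotate (c + 1)) (1 : ℚ)) :=
      Finset.sum_congr rfl fun c hc => inner_eq K hne (j + 1) c (Finset.mem_range.mp hc)
    _ = ∑ i ∈ Finset.range K.length,
          (Finsupp.single ((j + 1 + (K.rotate i).headI) :: (K.rotate i).tail) (1 : ℚ)
            + Finsupp.single ((j + 1) :: K.rotate i) (1 : ℚ)) := by
      refine Finset.sum_nbij' (fun c => (c + 1) % K.length)
        (fun i => (i + (K.length - 1)) % K.length) ?_ ?_ ?_ ?_ ?_
      · intro c _
        exact Finset.mem_range.mpr (Nat.mod_lt _ hr)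
      · intro i _
        exact Finset.mem_range.mpr (Nat.mod_lt _ hr)
      · intro c hc
        have hc' : c < K.length := Finset.mem_range.mp hc
        rw [Nat.mod_add_mod, show c + 1 + (K.length - 1) = c + K.length by omega,
          Nat.add_mod_right, Nat.mod_eq_of_lt hc']
      · intro i hi
        have hi' : i < K.length := Finset.mem_range.mp hi
        rw [Nat.mod_add_mod, show i + (K.length - 1) + 1 = i + K.length by omega,
          Nat.add_mod_right, Nat.mod_eq_of_lt hi']
      · intro c _
        rw [List.rotate_mod]
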